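/- The eigenvector generating functions f_m(u) = √(1−q²)·(q−u)^m/(1−qu)^{m+1} define vectors v^{(m)} = (coefficients of u^i in f_m) that are orthonormal: Σ_{i≥0} v_i^{(m)} v_i^{(m')} = δ_{m,m'}, where the sum is interpreted as the constant term in t of f_m(t)·f_{m'}(t^{-1}) (equivalently, evaluated as a convergent series/residue for |q| < 1). -/

import Mathlib

open PowerSeries Finset

namespace LorentzAux

noncomputable def G (q : ℝ) : PowerSeries ℝ := PowerSeries.mk fun n => q ^ n

lemma G_mul_eq_one (q : ℝ) : (G q) * (1 - C q * X) = 1 := by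
  have h : (G q) * (C q * X) = C q * (X * G q) := by ring
  rw [mul_sub, mul_one, h]
  ext n
  cases n with
  | zero => simp [G]
  | succ n =>
    rw [map_sub, coeff_C_mul, PowerSeries.coeff_succ_X_mul]
    simp [G, coeff_mk, pow_succ, coeff_one]
    ring

lemma constCoeff_ne (q : ℝ) :
    constantCoeff (1 - C q * X) ≠ 0 := by
  simp

lemma inv_eq (q : ℝ) : ((1 : PowerSeries ℝ) - C q * X)⁻¹ = G q := by
  rw [PowerSeries.inv_eq_iff_mul_eq_one (constCoeff_ne q)]
  exact G_mul_eq_one q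

lemma one_sub_ne (q : ℝ) : ((1 : PowerSeries ℝ) - C q * X) ≠ 0 := by
  intro h
  have := congrArg (constantCoeff) h
  simp at this

lemma key (q : ℝ) : C q * ((C q - X) * G q) = 1 + C (q^2 - 1) * G q := by
  have hC : C (q^2-1) = C q * C q - 1 := by
    rw [map_sub, map_pow, map_one, sq]
  apply mul_left_cancel₀ (one_sub_ne q)
  have h := G_mul_eq_one q
  rw [hC]
  linear_combination (C q * (C q - X) - (C q * C q - 1)) * h


noncomputable def F (q : ℝ) (m : ℕ) : PowerSeries ℝ :=
  C (Real.sqrt (1 - q ^ 2)) * (C q - X) ^ m * ((1 - C q * X)⁻¹) ^ (m + 1)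

noncomputable def V (q : ℝ) (m i : ℕ) : ℝ := coeff i (F q m)

noncomputable def W (q : ℝ) (m i : ℕ) : ℝ := ∑ k ∈ range (i + 1), q ^ k * V q m (i - k)

lemma F_succ (q : ℝ) (m : ℕ) :
    C q * F q (m+1) = F q m + C (q^2 - 1) * (G q * F q m) := by
  have h := key q
  simp only [F, inv_eq]
  linear_combination (C (Real.sqrt (1-q^2)) * (C q - X)^m * (G q)^(m+1)) * h

lemma coeff_G_mul (q : ℝ) (m i : ℕ) : (coeff i) (G q * F q m) = W q m i := by
  rw [PowerSeries.coeff_mul, Finset.Nat.sum_antidiagonal_eq_sum_range_succ_mk]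
  simp [G, W, V]

lemma V_succ (q : ℝ) (m i : ℕ) : q * V q (m+1) i = V q m i + (q^2-1) * W q m i := by
  have h := congrArg (coeff i) (F_succ q m)
  rw [map_add, coeff_C_mul, coeff_C_mul, coeff_G_mul] at h
  exact h

lemma W_zero (q : ℝ) (m : ℕ) : W q m 0 = V q m 0 := by simp [W]

lemma W_succ (q : ℝ) (m i : ℕ) : W q m (i+1) = q * W q m i + V q m (i+1) := by
  simp only [W]
  rw [Finset.sum_range_succ', Finset.mul_sum]
  simp only [Nat.succ_sub_succ, pow_zero, one_mul, Nat.sub_zero]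
  congr 1
  apply Finset.sum_congr rfl
  intro x _
  ring

lemma V_zero (q : ℝ) (i : ℕ) : V q 0 i = Real.sqrt (1-q^2) * q^i := by
  simp [V, F, inv_eq, G]

def Dec (q : ℝ) (a : ℕ → ℝ) : Prop :=
  ∃ C k, 0 ≤ C ∧ ∀ i, |a i| ≤ C * ((i:ℝ)+1)^k * q^i

lemma summable_aux (k : ℕ) {r : ℝ} (h0 : 0 < r) (h1 : r < 1) :
    Summable fun i : ℕ => ((i:ℝ)+1)^k * r^i := by
  have h := summable_pow_mul_geometric_of_norm_lt_one (R := ℝ) k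
    (by rw [Real.norm_eq_abs, abs_of_pos h0]; exact h1)
  have h2 := h.comp_injective (add_left_injective 1)
  have h3 := h2.mul_left (1/r)
  refine h3.congr fun i => ?_
  simp only [Function.comp]
  push_cast
  field_simp
  ring

lemma Dec.mul {q : ℝ} {a b : ℕ → ℝ} (hq0 : 0 < q) (hq1 : q < 1)
    (ha : Dec q a) (hb : Dec q b) : Summable fun i => a i * b i := by
  obtain ⟨C, k, hC, hA⟩ := ha
  obtain ⟨D, l, hD, hB⟩ := hb
  have hq2 : (0:ℝ) < q^2 := by positivity
  have hq2' : q^2 < 1 := by nlinarith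
  apply Summable.of_abs
  apply Summable.of_nonneg_of_le (fun i => abs_nonneg _) ?_
    ((summable_aux (k+l) hq2 hq2').mul_left (C*D))
  intro i
  rw [abs_mul]
  calc |a i| * |b i| ≤ (C*((i:ℝ)+1)^k*q^i) * (D*((i:ℝ)+1)^l*q^i) := by
        apply mul_le_mul (hA i) (hB i) (abs_nonneg _)
        have : (0:ℝ) ≤ q := hq0.le
        positivity
    _ = C*D*(((i:ℝ)+1)^(k+l)*(q^2)^i) := by ring

lemma Dec.shift {q : ℝ} {a : ℕ → ℝ} (hq0 : 0 < q) (ha : Dec q a) :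
    Dec q fun i => a (i+1) := by
  obtain ⟨C, k, hC, hA⟩ := ha
  refine ⟨C*2^k*q, k, by positivity, fun i => ?_⟩
  have h1 : |a (i+1)| ≤ C * (((i+1:ℕ):ℝ)+1)^k * q^(i+1) := hA (i+1)
  have h2 : (((i+1:ℕ):ℝ)+1)^k ≤ (2*((i:ℝ)+1))^k := by
    apply pow_le_pow_left₀ (by positivity)
    push_cast
    have : (0:ℝ) ≤ (i:ℝ) := Nat.cast_nonneg i
    linarith
  calc |a (i+1)| ≤ C * (((i+1:ℕ):ℝ)+1)^k * q^(i+1) := h1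
    _ ≤ C * (2*((i:ℝ)+1))^k * q^(i+1) := by
        apply mul_le_mul_of_nonneg_right (mul_le_mul_of_nonneg_left h2 hC)
          (pow_nonneg hq0.le _)
    _ = C*2^k*q * (((i:ℝ)+1)^k * q^i) := by rw [mul_pow, pow_succ]; ring
    _ = C*2^k*q * ((i:ℝ)+1)^k * q^i := by ring

lemma Dec.geom {q : ℝ} (hq0 : 0 < q) : Dec q fun i => q^i := by
  refine ⟨1, 0, zero_le_one, fun i => ?_⟩
  rw [abs_pow, abs_of_pos hq0, pow_zero]
  simp

lemma decW {q : ℝ} (hq0 : 0 < q) (m : ℕ) (h : Dec q (V q m)) : Dec q (W q m) := by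
  obtain ⟨C, k, hC, hb⟩ := h
  refine ⟨C, k+1, hC, fun i => ?_⟩
  have hqn : (0:ℝ) ≤ q := hq0.le
  calc |W q m i| ≤ ∑ j ∈ range (i+1), |q^j * V q m (i-j)| := by
        simp only [W]; exact Finset.abs_sum_le_sum_abs _ _
    _ ≤ ∑ _j ∈ range (i+1), C * ((i:ℝ)+1)^k * q^i := by
        apply Finset.sum_le_sum
        intro j hj
        rw [abs_mul, abs_pow, abs_of_nonneg hqn]
        have hpow : q^j * q^(i-j) = q^i := by
          rw [← pow_add]
          congr 1
          have := Finset.mem_range.mp hj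
          omega
        calc q^j * |V q m (i-j)| ≤ q^j * (C * (((i-j:ℕ):ℝ)+1)^k * q^(i-j)) := by
              apply mul_le_mul_of_nonneg_left (hb _) (pow_nonneg hqn _)
          _ ≤ q^j * (C * ((i:ℝ)+1)^k * q^(i-j)) := by
              apply mul_le_mul_of_nonneg_left ?_ (pow_nonneg hqn _)
              apply mul_le_mul_of_nonneg_right ?_ (pow_nonneg hqn _)
              apply mul_le_mul_of_nonneg_left ?_ hC
              apply pow_le_pow_left₀ (by positivity)
              have : ((i-j:ℕ):ℝ) ≤ (i:ℝ) := Nat.cast_le.mpr (Nat.sub_le i j)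
              linarith
          _ = C * ((i:ℝ)+1)^k * q^i := by
              linear_combination (C * ((i:ℝ)+1)^k) * hpow
    _ = ((i+1:ℕ):ℝ) * (C * ((i:ℝ)+1)^k * q^i) := by
        rw [Finset.sum_const, Finset.card_range, nsmul_eq_mul]
    _ ≤ C * ((i:ℝ)+1)^(k+1) * q^i := by
        push_cast
        rw [pow_succ]
        apply le_of_eq
        ring

lemma decV {q : ℝ} (hq0 : 0 < q) (hq1 : q < 1) : ∀ m, Dec q (V q m) := by
  intro m
  induction m with
  | zero =>
    refine ⟨Real.sqrt (1-q^2), 0, Real.sqrt_nonneg _, fun i => ?_⟩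
    rw [V_zero, abs_mul, abs_of_nonneg (Real.sqrt_nonneg _), abs_pow,
      abs_of_nonneg hq0.le, pow_zero]
    apply le_of_eq; ring
  | succ n ih =>
    obtain ⟨C, k, hC, hV⟩ := ih
    obtain ⟨D, l, hD, hW⟩ := decW hq0 n ⟨C, k, hC, hV⟩
    refine ⟨(C+D)/q, k ⊔ l, by positivity, fun i => ?_⟩
    have h := V_succ q n i
    have hVi : V q (n+1) i = (V q n i + (q^2-1) * W q n i)/q := by
      rw [eq_div_iff hq0.ne']
      linear_combination h
    rw [hVi, abs_div, abs_of_pos hq0]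
    have hrw : (C+D)/q * ((i:ℝ)+1)^(k ⊔ l) * q^i
        = ((C+D) * ((i:ℝ)+1)^(k ⊔ l) * q^i)/q := by ring
    rw [hrw, div_le_div_iff_of_pos_right hq0]
    have h1 : (1:ℝ) ≤ (i:ℝ)+1 := by
      have : (0:ℝ) ≤ (i:ℝ) := Nat.cast_nonneg i
      linarith
    have hk : ((i:ℝ)+1)^k ≤ ((i:ℝ)+1)^(k ⊔ l) := pow_le_pow_right₀ h1 (le_max_left k l)
    have hl : ((i:ℝ)+1)^l ≤ ((i:ℝ)+1)^(k ⊔ l) := pow_le_pow_right₀ h1 (le_max_right k l)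
    have habs : |q^2-1| ≤ 1 := by rw [abs_le]; constructor <;> nlinarith
    calc |V q n i + (q^2-1) * W q n i| ≤ |V q n i| + |q^2-1| * |W q n i| := by
          rw [← abs_mul]; exact abs_add_le _ _
      _ ≤ C * ((i:ℝ)+1)^k * q^i + 1 * (D * ((i:ℝ)+1)^l * q^i) := by
          apply add_le_add (hV i)
          apply mul_le_mul habs (hW i) (abs_nonneg _) zero_le_one
      _ ≤ C * ((i:ℝ)+1)^(k ⊔ l) * q^i + 1 * (D * ((i:ℝ)+1)^(k ⊔ l) * q^i) := by
          have hq : (0:ℝ) ≤ q^i := pow_nonneg hq0.le i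
          apply add_le_add
          · apply mul_le_mul_of_nonneg_right (mul_le_mul_of_nonneg_left hk hC) hq
          · rw [one_mul, one_mul]
            apply mul_le_mul_of_nonneg_right (mul_le_mul_of_nonneg_left hl hD) hq
      _ = (C+D) * ((i:ℝ)+1)^(k ⊔ l) * q^i := by ring

set_option maxHeartbeats 1000000 in
lemma iso {q : ℝ} (hq0 : 0 < q) (hq1 : q < 1) (m m' : ℕ) :
    ∑' i, V q (m+1) i * V q (m'+1) i = ∑' i, V q m i * V q m' i := by
  have da : Dec q (V q m) := decV hq0 hq1 m
  have da' : Dec q (V q m') := decV hq0 hq1 m'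
  have ds : Dec q (W q m) := decW hq0 m da
  have ds' : Dec q (W q m') := decW hq0 m' da'
  have Saa : Summable fun i => V q m i * V q m' i := Dec.mul hq0 hq1 da da'
  have Sss : Summable fun i => W q m i * W q m' i := Dec.mul hq0 hq1 ds ds'
  have Sas' : Summable fun i => V q m i * W q m' i := Dec.mul hq0 hq1 da ds'
  have Ssa' : Summable fun i => W q m i * V q m' i := Dec.mul hq0 hq1 ds da'
  have Sa1s' : Summable fun i => V q m (i+1) * W q m' i :=
    Dec.mul hq0 hq1 (da.shift hq0) ds'
  have Ssa1 : Summable fun i => W q m i * V q m' (i+1) :=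
    Dec.mul hq0 hq1 ds (da'.shift hq0)
  have Sa1a1 : Summable fun i => V q m (i+1) * V q m' (i+1) :=
    Dec.mul hq0 hq1 (da.shift hq0) (da'.shift hq0)
  -- shift identity for A
  have shiftA : V q m 0 * V q m' 0 + (∑' i, V q m (i+1) * V q m' (i+1))
      = ∑' i, V q m i * V q m' i := by
    have h := Summable.sum_add_tsum_nat_add (f := fun i => V q m i * V q m' i) 1 Saa
    simpa using h
  -- Q equation
  have hQ : (∑' i, W q m i * W q m' i)
      = q^2 * (∑' i, W q m i * W q m' i)
        + q * (∑' i, V q m (i+1) * W q m' i)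
        + q * (∑' i, W q m i * V q m' (i+1))
        + ∑' i, V q m i * V q m' i := by
    have h1 := (Summable.sum_add_tsum_nat_add (f := fun i => W q m i * W q m' i) 1 Sss).symm
    simp only [Finset.sum_range_one] at h1
    have h2 : ∀ i:ℕ, W q m (i+1) * W q m' (i+1)
        = q^2 * (W q m i * W q m' i) + q * (V q m (i+1) * W q m' i)
          + q * (W q m i * V q m' (i+1)) + V q m (i+1) * V q m' (i+1) := by
      intro i; rw [W_succ, W_succ]; ring
    rw [tsum_congr h2,
      Summable.tsum_add (((Sss.mul_left _).add (Sa1s'.mul_left _)).add (Ssa1.mul_left _)) Sa1a1,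
      Summable.tsum_add ((Sss.mul_left _).add (Sa1s'.mul_left _)) (Ssa1.mul_left _),
      Summable.tsum_add (Sss.mul_left _) (Sa1s'.mul_left _),
      tsum_mul_left, tsum_mul_left, tsum_mul_left, W_zero, W_zero] at h1
    linarith [shiftA]
  -- P1 equation
  have hP1 : (∑' i, V q m i * W q m' i)
      = (∑' i, V q m i * V q m' i) + q * (∑' i, V q m (i+1) * W q m' i) := by
    have h1 := (Summable.sum_add_tsum_nat_add (f := fun i => V q m i * W q m' i) 1 Sas').symm
    simp only [Finset.sum_range_one] at h1
    have h2 : ∀ i:ℕ, V q m (i+1) * W q m' (i+1)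
        = q * (V q m (i+1) * W q m' i) + V q m (i+1) * V q m' (i+1) := by
      intro i; rw [W_succ]; ring
    rw [tsum_congr h2, Summable.tsum_add (Sa1s'.mul_left _) Sa1a1, tsum_mul_left, W_zero] at h1
    linarith [shiftA]
  -- P2 equation
  have hP2 : (∑' i, W q m i * V q m' i)
      = (∑' i, V q m i * V q m' i) + q * (∑' i, W q m i * V q m' (i+1)) := by
    have h1 := (Summable.sum_add_tsum_nat_add (f := fun i => W q m i * V q m' i) 1 Ssa').symm
    simp only [Finset.sum_range_one] at h1
    have h2 : ∀ i:ℕ, W q m (i+1) * V q m' (i+1)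
        = q * (W q m i * V q m' (i+1)) + V q m (i+1) * V q m' (i+1) := by
      intro i; rw [W_succ]; ring
    rw [tsum_congr h2, Summable.tsum_add (Ssa1.mul_left _) Sa1a1, tsum_mul_left, W_zero] at h1
    linarith [shiftA]
  -- expansion of main sum
  have hmain : ∀ i, q^2 * (V q (m+1) i * V q (m'+1) i)
      = V q m i * V q m' i + (q^2-1) * (V q m i * W q m' i)
        + (q^2-1) * (W q m i * V q m' i) + (q^2-1)^2 * (W q m i * W q m' i) := by
    intro i
    have h1 := V_succ q m i
    have h2 := V_succ q m' i
    linear_combination (q * V q (m'+1) i) * h1 + (V q m i + (q^2-1)*W q m i) * h2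
  have expand : q^2 * (∑' i, V q (m+1) i * V q (m'+1) i)
      = (∑' i, V q m i * V q m' i) + (q^2-1) * (∑' i, V q m i * W q m' i)
        + (q^2-1) * (∑' i, W q m i * V q m' i)
        + (q^2-1)^2 * (∑' i, W q m i * W q m' i) := by
    rw [← tsum_mul_left, tsum_congr hmain,
      Summable.tsum_add ((Saa.add (Sas'.mul_left _)).add (Ssa'.mul_left _)) (Sss.mul_left _),
      Summable.tsum_add (Saa.add (Sas'.mul_left _)) (Ssa'.mul_left _),
      Summable.tsum_add Saa (Sas'.mul_left _),
      tsum_mul_left, tsum_mul_left, tsum_mul_left]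
  have hq2 : (q:ℝ)^2 ≠ 0 := by positivity
  apply mul_left_cancel₀ hq2
  rw [expand]
  linear_combination (q^2-1)*hP1 + (q^2-1)*hP2 + (1-q^2)*hQ

set_option maxHeartbeats 1000000 in
lemma eval_succ {q : ℝ} (hq0 : 0 < q) (hq1 : q < 1) (m : ℕ) :
    ∑' i, V q (m+1) i * q^i = 0 := by
  have dg : Dec q (fun i => q^i) := Dec.geom hq0
  have da : Dec q (V q m) := decV hq0 hq1 m
  have ds : Dec q (W q m) := decW hq0 m da
  have da1 : Dec q (V q (m+1)) := decV hq0 hq1 (m+1)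
  have SE : Summable fun i => V q m i * q^i := Dec.mul hq0 hq1 da dg
  have SD : Summable fun i => W q m i * q^i := Dec.mul hq0 hq1 ds dg
  have SE' : Summable fun i => V q (m+1) i * q^i := Dec.mul hq0 hq1 da1 dg
  have SE1 : Summable fun i => V q m (i+1) * q^(i+1) :=
    (summable_nat_add_iff 1).mpr SE
  have shiftE : V q m 0 + (∑' i, V q m (i+1) * q^(i+1)) = ∑' i, V q m i * q^i := by
    have h := Summable.sum_add_tsum_nat_add (f := fun i => V q m i * q^i) 1 SE
    simpa using h
  have hD : (∑' i, W q m i * q^i)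
      = q^2 * (∑' i, W q m i * q^i) + ∑' i, V q m i * q^i := by
    have h1 := (Summable.sum_add_tsum_nat_add (f := fun i => W q m i * q^i) 1 SD).symm
    simp only [Finset.sum_range_one] at h1
    have h2 : ∀ i:ℕ, W q m (i+1) * q^(i+1)
        = q^2 * (W q m i * q^i) + V q m (i+1) * q^(i+1) := by
      intro i; rw [W_succ]; ring
    rw [tsum_congr h2, Summable.tsum_add (SD.mul_left _) SE1, tsum_mul_left, W_zero] at h1
    simp only [pow_zero, mul_one] at h1
    linarith [shiftE]
  have hstep : ∀ i:ℕ, q * (V q (m+1) i * q^i)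
      = V q m i * q^i + (q^2-1) * (W q m i * q^i) := by
    intro i
    linear_combination (q^i) * V_succ q m i
  have hE1 : q * (∑' i, V q (m+1) i * q^i)
      = (∑' i, V q m i * q^i) + (q^2-1) * (∑' i, W q m i * q^i) := by
    rw [← tsum_mul_left, tsum_congr hstep, Summable.tsum_add SE (SD.mul_left _), tsum_mul_left]
  have h0 : q * (∑' i, V q (m+1) i * q^i) = 0 := by
    linear_combination hE1 - hD
  exact (mul_eq_zero.mp h0).resolve_left hq0.ne'

lemma sq_pos {q : ℝ} (hq0 : 0 < q) (hq1 : q < 1) : 0 < 1 - q^2 := by nlinarith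

lemma tsum_base {q : ℝ} (hq0 : 0 < q) (hq1 : q < 1) (k : ℕ) :
    ∑' i, V q 0 i * V q k i = if k = 0 then 1 else 0 := by
  have hpos := sq_pos hq0 hq1
  cases k with
  | zero =>
    simp only [if_pos rfl, if_pos trivial]
    have h : ∀ i:ℕ, V q 0 i * V q 0 i = (1 - q^2) * (q^2)^i := by
      intro i
      rw [V_zero]
      have hs : Real.sqrt (1-q^2) * Real.sqrt (1-q^2) = 1 - q^2 :=
        Real.mul_self_sqrt hpos.le
      calc Real.sqrt (1-q^2) * q^i * (Real.sqrt (1-q^2) * q^i)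
          = Real.sqrt (1-q^2) * Real.sqrt (1-q^2) * (q^i * q^i) := by ring
        _ = (1-q^2) * (q^2)^i := by rw [hs]; ring
    rw [tsum_congr h, tsum_mul_left,
      tsum_geometric_of_lt_one (by positivity) (by nlinarith)]
    field_simp
  | succ n =>
    simp only [Nat.succ_ne_zero, if_false]
    have h : ∀ i:ℕ, V q 0 i * V q (n+1) i
        = Real.sqrt (1-q^2) * (V q (n+1) i * q^i) := by
      intro i; rw [V_zero]; ring
    rw [tsum_congr h, tsum_mul_left, eval_succ hq0 hq1 n, mul_zero]

lemma chain {q : ℝ} (hq0 : 0 < q) (hq1 : q < 1) (d : ℕ) :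
    ∀ m, ∑' i, V q m i * V q (m+d) i = ∑' i, V q 0 i * V q d i := by
  intro m
  induction m with
  | zero => simp
  | succ n ih =>
    have h := iso hq0 hq1 n (n+d)
    have e : n + 1 + d = n + d + 1 := by omega
    rw [e, h, ih]

lemma tsum_VV {q : ℝ} (hq0 : 0 < q) (hq1 : q < 1) (m m' : ℕ) :
    ∑' i, V q m i * V q m' i = if m = m' then 1 else 0 := by
  rcases le_total m m' with h | h
  · obtain ⟨d, rfl⟩ := Nat.exists_eq_add_of_le h
    rw [chain hq0 hq1 d m, tsum_base hq0 hq1 d]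
    rcases Nat.eq_zero_or_pos d with rfl | hd
    · simp
    · rw [if_neg (by omega), if_neg (by omega)]
  · obtain ⟨d, rfl⟩ := Nat.exists_eq_add_of_le h
    have hc : ∀ i:ℕ, V q (m'+d) i * V q m' i = V q m' i * V q (m'+d) i := by
      intro i; ring
    rw [tsum_congr hc, chain hq0 hq1 d m', tsum_base hq0 hq1 d]
    rcases Nat.eq_zero_or_pos d with rfl | hd
    · simp
    · rw [if_neg (by omega), if_neg (by omega)]

end LorentzAux

open PowerSeries

theorem lorentzian_eigenvectors_orthonormal (q : ℝ) (hq0 : 0 < q) (hq1 : q < 1) :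
    let f : ℕ → PowerSeries ℝ := fun m =>
      PowerSeries.C (R := ℝ) (Real.sqrt (1 - q ^ 2)) *
        (PowerSeries.C (R := ℝ) q - PowerSeries.X) ^ m *
        ((1 - PowerSeries.C (R := ℝ) q * PowerSeries.X)⁻¹) ^ (m + 1)
    let v : ℕ → ℕ → ℝ := fun m i => PowerSeries.coeff (R := ℝ) i (f m)
    ∀ m m' : ℕ,
      HasSum (fun i => v m i * v m' i) (if m = m' then (1 : ℝ) else 0) := by
  intro f v m m'
  have hS : Summable fun i => LorentzAux.V q m i * LorentzAux.V q m' i :=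
    LorentzAux.Dec.mul hq0 hq1 (LorentzAux.decV hq0 hq1 m) (LorentzAux.decV hq0 hq1 m')
  have h := hS.hasSum
  rw [LorentzAux.tsum_VV hq0 hq1 m m'] at h
  exact h
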